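/- arXiv:1804.06230 — 3 statements merged into one kernel-verified Lean document; each statement's English description precedes it below -/
import Mathlib

section
/- Let p(x) = (1/2)e^{-|x|}. For every v ∈ H^1(ℝ) and every x ∈ ℝ, (p * (v² + v_x²/2))(x) ≥ (1/2) v(x)². -/
open MeasureTheory Set Filter Real

private lemma expIic_int {g : ℝ → ℝ} (hg : Integrable g) (x : ℝ) :
    IntegrableOn (fun t => Real.exp t * g t) (Iic x) := by
  apply Integrable.mono' ((hg.abs.const_mul (Real.exp x)).integrableOn)
  · exact (Real.continuous_exp.aestronglyMeasurable.mul hg.aestronglyMeasurable).restrict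
  · rw [ae_restrict_iff' measurableSet_Iic]
    refine ae_of_all _ fun t ht => ?_
    have : Real.exp t ≤ Real.exp x := Real.exp_le_exp.2 ht
    have h0 := Real.exp_pos t
    rw [Real.norm_eq_abs, abs_mul, abs_of_pos h0]
    exact mul_le_mul_of_nonneg_right this (abs_nonneg _) |>.trans_eq rfl

private lemma expIoi_int {g : ℝ → ℝ} (hg : Integrable g) (x : ℝ) :
    IntegrableOn (fun t => Real.exp (-t) * g t) (Ioi x) := by
  apply Integrable.mono' ((hg.abs.const_mul (Real.exp (-x))).integrableOn)
  · exact ((Real.continuous_exp.comp continuous_neg).aestronglyMeasurable.mul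
      hg.aestronglyMeasurable).restrict
  · rw [ae_restrict_iff' measurableSet_Ioi]
    refine ae_of_all _ fun t ht => ?_
    have : Real.exp (-t) ≤ Real.exp (-x) := Real.exp_le_exp.2 (by linarith [mem_Ioi.1 ht])
    have h0 := Real.exp_pos (-t)
    rw [Real.norm_eq_abs, abs_mul, abs_of_pos h0]
    exact mul_le_mul_of_nonneg_right this (abs_nonneg _)

set_option maxHeartbeats 1000000 in
/-- For `p(x) = (1/2)e^{-|x|}` and `v ∈ H¹(ℝ)`,
`(p * (v² + v_x²/2))(x) ≥ (1/2) v(x)²`. -/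
theorem stmt_1 (v : ℝ → ℝ) (hv : Differentiable ℝ v)
    (h1 : Integrable (fun x => (v x) ^ 2))
    (h2 : Integrable (fun x => (deriv v x) ^ 2)) :
    ∀ x : ℝ,
      (1 / 2) * (v x) ^ 2 ≤
        ∫ t : ℝ, (1 / 2) * Real.exp (-|x - t|) *
          ((v t) ^ 2 + (deriv v t) ^ 2 / 2) := by
  intro x
  set w := deriv v with hw
  have hwm : Measurable w := measurable_deriv v
  have hvm : Measurable v := hv.continuous.measurable
  -- v * w is integrable
  have hvw : Integrable (fun t => v t * w t) := by
    refine Integrable.mono' (((h1.add h2).div_const 2)) ?_ (ae_of_all _ fun t => ?_)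
    · exact (hvm.mul hwm).aestronglyMeasurable
    · rw [Real.norm_eq_abs, abs_mul]
      simp only [Pi.add_apply]
      nlinarith [sq_nonneg (|v t| - |w t|), sq_abs (v t), sq_abs (w t),
        abs_nonneg (v t), abs_nonneg (w t)]
  -- v² tends to 0 at ±∞
  have hderivsq : ∀ t : ℝ, HasDerivAt (fun s => v s ^ 2) (2 * v t * w t) t := by
    intro t
    have := (hv t).hasDerivAt.pow 2
    exact this.congr_deriv (by simp [hw])
  have hbot0 : Tendsto (fun t => v t ^ 2) atBot (nhds 0) :=
    tendsto_zero_of_hasDerivAt_of_integrableOn_Iic (a := 0)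
      (fun t _ => hderivsq t)
      (((hvw.const_mul 2).congr (ae_of_all _ fun t => by ring)).integrableOn)
      h1.integrableOn
  have htop0 : Tendsto (fun t => v t ^ 2) atTop (nhds 0) :=
    tendsto_zero_of_hasDerivAt_of_integrableOn_Ioi (a := 0)
      (fun t _ => hderivsq t)
      (((hvw.const_mul 2).congr (ae_of_all _ fun t => by ring)).integrableOn)
      h1.integrableOn
  have hbot : Tendsto (fun t => Real.exp t * v t ^ 2) atBot (nhds 0) := by
    have := Real.tendsto_exp_atBot.mul hbot0
    simpa using this
  have htop : Tendsto (fun t => Real.exp (-t) * v t ^ 2) atTop (nhds 0) := by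
    have h' : Tendsto (fun t : ℝ => Real.exp (-t)) atTop (nhds 0) :=
      Real.tendsto_exp_atBot.comp tendsto_neg_atTop_atBot
    have := h'.mul htop0
    simpa using this
  -- integrable combinations
  have g1 : Integrable (fun t => v t ^ 2 + 2 * (v t * w t)) := h1.add (hvw.const_mul 2)
  have g2 : Integrable (fun t => v t ^ 2 - 2 * (v t * w t)) := h1.sub (hvw.const_mul 2)
  have g3 : Integrable (fun t => 2 * v t ^ 2 + w t ^ 2) := (h1.const_mul 2).add h2
  have g4 : Integrable (fun t => (v t - w t) ^ 2) := by
    refine (g2.add h2).congr (ae_of_all _ fun t => by simp only [Pi.add_apply]; ring)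
  have g5 : Integrable (fun t => (v t + w t) ^ 2) := by
    refine (g1.add h2).congr (ae_of_all _ fun t => by simp only [Pi.add_apply]; ring)
  -- FTC on (-∞, x]
  have hIic : ∫ t in Iic x, Real.exp t * (v t ^ 2 + 2 * (v t * w t))
      = Real.exp x * v x ^ 2 := by
    have := integral_Iic_of_hasDerivAt_of_tendsto'
      (f := fun t => Real.exp t * v t ^ 2)
      (f' := fun t => Real.exp t * (v t ^ 2 + 2 * (v t * w t)))
      (a := x) (m := 0)
      (fun t _ => by
        have h := (Real.hasDerivAt_exp t).mul (hderivsq t)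
        have h' : HasDerivAt (fun t => Real.exp t * v t ^ 2)
            (Real.exp t * (v t ^ 2 + 2 * (v t * w t))) t := by
          exact h.congr_deriv (by ring)
        exact h')
      (expIic_int g1 x) hbot
    simpa using this
  -- FTC on [x, ∞)
  have gIoi : Integrable (fun t => 2 * (v t * w t) - v t ^ 2) := (hvw.const_mul 2).sub h1
  have hIoi : ∫ t in Ioi x, Real.exp (-t) * (2 * (v t * w t) - v t ^ 2)
      = - (Real.exp (-x) * v x ^ 2) := by
    have := integral_Ioi_of_hasDerivAt_of_tendsto'
      (f := fun t => Real.exp (-t) * v t ^ 2)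
      (f' := fun t => Real.exp (-t) * (2 * (v t * w t) - v t ^ 2))
      (a := x) (m := 0)
      (fun t _ => by
        have h := ((hasDerivAt_neg t).exp).mul (hderivsq t)
        have h' : HasDerivAt (fun t => Real.exp (-t) * v t ^ 2)
            (Real.exp (-t) * (2 * (v t * w t) - v t ^ 2)) t := by
          exact h.congr_deriv (by ring)
        exact h')
      (expIoi_int gIoi x) htop
    simpa using this
  -- lower bound on the left half-line
  have hA : Real.exp x * v x ^ 2 ≤ ∫ t in Iic x, Real.exp t * (2 * v t ^ 2 + w t ^ 2) := by
    have hsplit : ∫ t in Iic x, Real.exp t * (2 * v t ^ 2 + w t ^ 2)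
        = (∫ t in Iic x, Real.exp t * (v t - w t) ^ 2)
          + ∫ t in Iic x, Real.exp t * (v t ^ 2 + 2 * (v t * w t)) := by
      rw [← integral_add (expIic_int g4 x) (expIic_int g1 x)]
      exact integral_congr_ae (ae_of_all _ fun t => by ring)
    have hpos : 0 ≤ ∫ t in Iic x, Real.exp t * (v t - w t) ^ 2 :=
      setIntegral_nonneg measurableSet_Iic fun t _ => by positivity
    rw [hsplit, hIic]; linarith
  -- lower bound on the right half-line
  have hIoi' : ∫ t in Ioi x, Real.exp (-t) * (v t ^ 2 - 2 * (v t * w t))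
      = Real.exp (-x) * v x ^ 2 := by
    have heq : (fun t => Real.exp (-t) * (v t ^ 2 - 2 * (v t * w t)))
        = fun t => -(Real.exp (-t) * (2 * (v t * w t) - v t ^ 2)) := by funext t; ring
    rw [heq, integral_neg, hIoi, neg_neg]
  have hB : Real.exp (-x) * v x ^ 2 ≤ ∫ t in Ioi x, Real.exp (-t) * (2 * v t ^ 2 + w t ^ 2) := by
    have hsplit : ∫ t in Ioi x, Real.exp (-t) * (2 * v t ^ 2 + w t ^ 2)
        = (∫ t in Ioi x, Real.exp (-t) * (v t + w t) ^ 2)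
          + ∫ t in Ioi x, Real.exp (-t) * (v t ^ 2 - 2 * (v t * w t)) := by
      rw [← integral_add (expIoi_int g5 x) (expIoi_int g2 x)]
      exact integral_congr_ae (ae_of_all _ fun t => by ring)
    have hpos : 0 ≤ ∫ t in Ioi x, Real.exp (-t) * (v t + w t) ^ 2 :=
      setIntegral_nonneg measurableSet_Ioi fun t _ => by positivity
    rw [hsplit, hIoi']; linarith
  -- the full integrand is integrable
  have hint : Integrable (fun t => (1 / 2) * Real.exp (-|x - t|) * (v t ^ 2 + w t ^ 2 / 2)) := by
    refine Integrable.mono' (h1.add h2) ?_ (ae_of_all _ fun t => ?_)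
    · exact ((measurable_const.mul
        ((((measurable_const.sub measurable_id).abs).neg).exp)).mul
        ((hvm.pow_const 2).add ((hwm.pow_const 2).div_const 2))).aestronglyMeasurable
    · have he : Real.exp (-|x - t|) ≤ 1 := Real.exp_le_one_iff.2 (neg_nonpos.2 (abs_nonneg _))
      have h0 := Real.exp_pos (-|x - t|)
      rw [Real.norm_eq_abs, abs_of_nonneg (by positivity)]
      simp only [Pi.add_apply]
      nlinarith [sq_nonneg (v t), sq_nonneg (w t)]
  -- split the integral at x
  have hsplitI : (∫ t : ℝ, (1 / 2) * Real.exp (-|x - t|) * (v t ^ 2 + w t ^ 2 / 2))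
      = (∫ t in Iic x, (1 / 2) * Real.exp (-|x - t|) * (v t ^ 2 + w t ^ 2 / 2))
        + ∫ t in Ioi x, (1 / 2) * Real.exp (-|x - t|) * (v t ^ 2 + w t ^ 2 / 2) :=
    (intervalIntegral.integral_Iic_add_Ioi hint.integrableOn hint.integrableOn).symm
  have hIa : (∫ t in Iic x, (1 / 2) * Real.exp (-|x - t|) * (v t ^ 2 + w t ^ 2 / 2))
      = (1 / 4) * Real.exp (-x) * ∫ t in Iic x, Real.exp t * (2 * v t ^ 2 + w t ^ 2) := by
    rw [← integral_const_mul]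
    refine setIntegral_congr_fun measurableSet_Iic fun t ht => ?_
    have h1' : |x - t| = x - t := abs_of_nonneg (by simpa using sub_nonneg.2 (mem_Iic.1 ht))
    have h2' : Real.exp (-(x - t)) = Real.exp t * Real.exp (-x) := by
      rw [← Real.exp_add]; ring_nf
    rw [h1', h2']; ring
  have hIb : (∫ t in Ioi x, (1 / 2) * Real.exp (-|x - t|) * (v t ^ 2 + w t ^ 2 / 2))
      = (1 / 4) * Real.exp x * ∫ t in Ioi x, Real.exp (-t) * (2 * v t ^ 2 + w t ^ 2) := by
    rw [← integral_const_mul]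
    refine setIntegral_congr_fun measurableSet_Ioi fun t ht => ?_
    have h1' : |x - t| = t - x := by
      rw [abs_of_nonpos (by simpa using sub_nonpos.2 (le_of_lt (mem_Ioi.1 ht)))]; ring
    have h2' : Real.exp (-(t - x)) = Real.exp (-t) * Real.exp x := by
      rw [← Real.exp_add]; ring_nf
    rw [h1', h2']; ring
  have hprod : Real.exp (-x) * Real.exp x = 1 := by rw [← Real.exp_add]; simp
  have ha' := mul_le_mul_of_nonneg_left hA (by positivity : (0:ℝ) ≤ (1 / 4) * Real.exp (-x))
  have hb' := mul_le_mul_of_nonneg_left hB (by positivity : (0:ℝ) ≤ (1 / 4) * Real.exp x)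
  rw [hsplitI, hIa, hIb]
  nlinarith [hprod, ha', hb']
end

section
/- For Ψ(x) = (2/π) arctan(e^{x/6}), the third derivative satisfies |Ψ'''(x)| ≤ (1/2) Ψ'(x) for all x ∈ ℝ. -/
lemma stmt_11_hu (x : ℝ) : HasDerivAt (fun x : ℝ => Real.exp (x / 6))
    (Real.exp (x / 6) * (1 / 6)) x :=
  ((hasDerivAt_id x).div_const 6).exp

lemma stmt_11_d1 (x : ℝ) :
    HasDerivAt (fun x : ℝ => (2 / Real.pi) * Real.arctan (Real.exp (x / 6)))
      ((1 / (3 * Real.pi)) * (Real.exp (x / 6) / (1 + Real.exp (x / 6) ^ 2))) x := by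
  have h := ((Real.hasDerivAt_arctan (Real.exp (x / 6))).comp x (stmt_11_hu x)).const_mul
    (2 / Real.pi)
  refine h.congr_deriv ?_
  have hD : (1 : ℝ) + Real.exp (x / 6) ^ 2 ≠ 0 := by positivity
  field_simp
  ring

lemma stmt_11_d2 (x : ℝ) :
    HasDerivAt (fun x : ℝ => (1 / (3 * Real.pi)) * (Real.exp (x / 6) / (1 + Real.exp (x / 6) ^ 2)))
      ((1 / (18 * Real.pi)) * (Real.exp (x / 6) * (1 - Real.exp (x / 6) ^ 2)
        / (1 + Real.exp (x / 6) ^ 2) ^ 2)) x := by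
  have hD : (1 : ℝ) + Real.exp (x / 6) ^ 2 ≠ 0 := by positivity
  have hden : HasDerivAt (fun x : ℝ => 1 + Real.exp (x / 6) ^ 2)
      ((2 : ℕ) * Real.exp (x / 6) ^ 1 * (Real.exp (x / 6) * (1 / 6))) x :=
    (((stmt_11_hu x).pow 2)).const_add 1
  have h := (((stmt_11_hu x).div hden hD)).const_mul (1 / (3 * Real.pi))
  refine h.congr_deriv ?_
  field_simp
  ring

lemma stmt_11_d3 (x : ℝ) :
    HasDerivAt (fun x : ℝ => (1 / (18 * Real.pi)) * (Real.exp (x / 6) * (1 - Real.exp (x / 6) ^ 2)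
        / (1 + Real.exp (x / 6) ^ 2) ^ 2))
      ((1 / (108 * Real.pi)) * (Real.exp (x / 6) *
        (Real.exp (x / 6) ^ 4 - 6 * Real.exp (x / 6) ^ 2 + 1)
        / (1 + Real.exp (x / 6) ^ 2) ^ 3)) x := by
  have hD : (1 : ℝ) + Real.exp (x / 6) ^ 2 ≠ 0 := by positivity
  have hD2 : ((1 : ℝ) + Real.exp (x / 6) ^ 2) ^ 2 ≠ 0 := pow_ne_zero _ hD
  have hnum : HasDerivAt (fun x : ℝ => Real.exp (x / 6) * (1 - Real.exp (x / 6) ^ 2))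
      ((Real.exp (x / 6) * (1 / 6)) * (1 - Real.exp (x / 6) ^ 2)
        + Real.exp (x / 6) * (0 - (2 : ℕ) * Real.exp (x / 6) ^ 1 * (Real.exp (x / 6) * (1 / 6)))) x :=
    (stmt_11_hu x).mul ((hasDerivAt_const x (1 : ℝ)).sub ((stmt_11_hu x).pow 2))
  have hden : HasDerivAt (fun x : ℝ => ((1 : ℝ) + Real.exp (x / 6) ^ 2) ^ 2)
      ((2 : ℕ) * ((1 : ℝ) + Real.exp (x / 6) ^ 2) ^ 1 *
        ((2 : ℕ) * Real.exp (x / 6) ^ 1 * (Real.exp (x / 6) * (1 / 6)))) x :=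
    ((((stmt_11_hu x).pow 2)).const_add 1).pow 2
  have h := ((hnum.div hden hD2)).const_mul (1 / (18 * Real.pi))
  refine h.congr_deriv ?_
  field_simp
  ring

/-- For `Ψ(x) = (2/π) arctan(e^{x/6})`, `|Ψ'''| ≤ (1/2) Ψ'` on `ℝ`. -/
theorem stmt_11 (Ψ : ℝ → ℝ)
    (hΨ : Ψ = fun x => (2 / Real.pi) * Real.arctan (Real.exp (x / 6))) :
    ∀ x : ℝ, |deriv (deriv (deriv Ψ)) x| ≤ (1 / 2) * deriv Ψ x := by
  subst hΨ
  have hd1 : deriv (fun x : ℝ => (2 / Real.pi) * Real.arctan (Real.exp (x / 6)))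
      = fun x : ℝ => (1 / (3 * Real.pi)) * (Real.exp (x / 6) / (1 + Real.exp (x / 6) ^ 2)) :=
    funext fun x => (stmt_11_d1 x).deriv
  have hd2 : deriv (fun x : ℝ => (1 / (3 * Real.pi)) *
      (Real.exp (x / 6) / (1 + Real.exp (x / 6) ^ 2)))
      = fun x : ℝ => (1 / (18 * Real.pi)) * (Real.exp (x / 6) * (1 - Real.exp (x / 6) ^ 2)
        / (1 + Real.exp (x / 6) ^ 2) ^ 2) :=
    funext fun x => (stmt_11_d2 x).deriv
  intro x
  rw [hd1, hd2]
  rw [(stmt_11_d3 x).deriv]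
  set u := Real.exp (x / 6) with hu
  have hu0 : 0 < u := Real.exp_pos _
  have hπ : 0 < Real.pi := Real.pi_pos
  have hD : (0 : ℝ) < 1 + u ^ 2 := by positivity
  have hkey : |u * (u ^ 4 - 6 * u ^ 2 + 1) / (1 + u ^ 2) ^ 3| ≤ u / (1 + u ^ 2) := by
    rw [abs_div, abs_of_pos (pow_pos hD 3), div_le_div_iff₀ (pow_pos hD 3) hD,
      abs_mul, abs_of_pos hu0]
    have habs : |u ^ 4 - 6 * u ^ 2 + 1| ≤ (1 + u ^ 2) ^ 2 := by
      rw [abs_le]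
      constructor <;> nlinarith [sq_nonneg (u ^ 2 - 1), sq_nonneg u]
    nlinarith [mul_le_mul_of_nonneg_left habs (le_of_lt hu0), pow_pos hD 2]
  calc |1 / (108 * Real.pi) * (u * (u ^ 4 - 6 * u ^ 2 + 1) / (1 + u ^ 2) ^ 3)|
      = (1 / (108 * Real.pi)) * |u * (u ^ 4 - 6 * u ^ 2 + 1) / (1 + u ^ 2) ^ 3| := by
        rw [abs_mul, abs_of_pos (by positivity : (0:ℝ) < 1 / (108 * Real.pi))]
    _ ≤ (1 / (108 * Real.pi)) * (u / (1 + u ^ 2)) := by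
        apply mul_le_mul_of_nonneg_left hkey (by positivity)
    _ ≤ (1 / 2) * ((1 / (3 * Real.pi)) * (u / (1 + u ^ 2))) := by
        rw [← mul_assoc]
        apply mul_le_mul_of_nonneg_right _ (by positivity)
        rw [show (1:ℝ)/2 * (1/(3*Real.pi)) = 1/(6*Real.pi) by ring,
          div_le_div_iff₀ (by positivity) (by positivity)]
        nlinarith [hπ]
end

section
/- Let p(x)=(1/2)e^{-|x|} and let Ψ(x) = (2/π) arctan(e^{x/6}). Since (1 - d²/dx²)Ψ' ≥ (1/2)Ψ' pointwise, it follows that p * Ψ' ≤ 2 Ψ' pointwise, i.e. (1-∂_x²)^{-1} Ψ' ≤ 2 Ψ'. -/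
open Real MeasureTheory Set

noncomputable def gg (x : ℝ) : ℝ := (1/(6*Real.pi)) * (Real.cosh (x/6))⁻¹
noncomputable def gg1 (x : ℝ) : ℝ :=
  -(1/(36*Real.pi)) * (Real.sinh (x/6) / Real.cosh (x/6)^2)
noncomputable def gg2 (x : ℝ) : ℝ :=
  (1/(216*Real.pi)) * ((Real.sinh (x/6)^2 * 2 - Real.cosh (x/6)^2) / Real.cosh (x/6)^3)

lemma hasDerivAt_gg (x : ℝ) :
    HasDerivAt (fun x : ℝ => (2 / Real.pi) * Real.arctan (Real.exp (x / 6))) (gg x) x := by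
  have hu : HasDerivAt (fun x : ℝ => x / 6) (1/6) x := by
    simpa using (hasDerivAt_id x).div_const 6
  have ha := (hu.exp.arctan).const_mul (2 / Real.pi)
  refine ha.congr_deriv ?_
  symm
  have hπ := Real.pi_pos
  have hE := Real.exp_pos (x/6)
  have hc := Real.cosh_pos (x/6)
  rw [gg, Real.cosh_eq, Real.exp_neg]
  field_simp
  ring

lemma hasDerivAt_gg1 (x : ℝ) : HasDerivAt gg (gg1 x) x := by
  have hu : HasDerivAt (fun x : ℝ => x / 6) (1/6) x := by
    simpa using (hasDerivAt_id x).div_const 6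
  have hc := Real.cosh_pos (x/6)
  have h := ((hu.cosh).inv hc.ne').const_mul (1/(6*Real.pi))
  refine h.congr_deriv ?_
  symm
  have hπ := Real.pi_ne_zero
  rw [gg1]
  field_simp
  ring

lemma hasDerivAt_gg2 (x : ℝ) : HasDerivAt gg1 (gg2 x) x := by
  have hu : HasDerivAt (fun x : ℝ => x / 6) (1/6) x := by
    simpa using (hasDerivAt_id x).div_const 6
  have hc := Real.cosh_pos (x/6)
  have hden : HasDerivAt (fun x : ℝ => Real.cosh (x/6)^2)
      (2 * Real.cosh (x/6)^1 * (Real.sinh (x/6) * (1/6))) x := by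
    simpa using (hu.cosh).fun_pow 2
  have h := ((hu.sinh).div hden (by positivity)).const_mul (-(1/(36*Real.pi)))
  refine h.congr_deriv ?_
  symm
  have hπ := Real.pi_pos
  rw [gg2]
  field_simp
  ring

lemma gg_pos (x : ℝ) : 0 < gg x := by
  have hπ := Real.pi_pos
  have hc := Real.cosh_pos (x/6)
  rw [gg]; positivity

/-- `cosh (a + b) ≤ exp |a| * cosh b`. -/
lemma cosh_add_le (a b : ℝ) : Real.cosh (a + b) ≤ Real.exp |a| * Real.cosh b := by
  have h1 : |Real.sinh b| ≤ Real.cosh b := by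
    rw [abs_le]
    constructor
    · nlinarith [Real.cosh_add_sinh b, Real.exp_pos b]
    · nlinarith [Real.cosh_sub_sinh b, Real.exp_pos (-b)]
  have h2 : Real.sinh a * Real.sinh b ≤ |Real.sinh a| * Real.cosh b := by
    calc Real.sinh a * Real.sinh b ≤ |Real.sinh a * Real.sinh b| := le_abs_self _
      _ = |Real.sinh a| * |Real.sinh b| := abs_mul _ _
      _ ≤ |Real.sinh a| * Real.cosh b := by
          exact mul_le_mul_of_nonneg_left h1 (abs_nonneg _)
  have h3 : Real.cosh a + |Real.sinh a| = Real.exp |a| := by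
    rw [Real.abs_sinh, ← Real.cosh_abs a, Real.cosh_add_sinh]
  rw [Real.cosh_add]
  nlinarith [Real.cosh_pos b]

lemma integrable_exp_neg_abs' : Integrable (fun u : ℝ => Real.exp (-|u|)) := by
  have h1 : IntegrableOn (fun u : ℝ => Real.exp (-|u|)) (Iic (0:ℝ)) := by
    refine (integrableOn_exp_Iic 0).congr_fun (fun u hu => ?_) measurableSet_Iic
    rw [abs_of_nonpos (mem_Iic.mp hu), neg_neg]
  have h2 : IntegrableOn (fun u : ℝ => Real.exp (-|u|)) (Ioi (0:ℝ)) := by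
    refine (exp_neg_integrableOn_Ioi 0 (by norm_num : (0:ℝ) < 1)).congr_fun
      (fun u hu => ?_) measurableSet_Ioi
    rw [abs_of_pos (mem_Ioi.mp hu)]; ring_nf
  rw [← integrableOn_univ, ← Iic_union_Ioi (a := (0:ℝ))]
  exact h1.union h2

lemma integral_exp_neg_abs' : (∫ u : ℝ, Real.exp (-|u|)) = 2 := by
  have h1 : IntegrableOn (fun u : ℝ => Real.exp (-|u|)) (Iic (0:ℝ)) :=
    integrable_exp_neg_abs'.integrableOn
  have h2 : IntegrableOn (fun u : ℝ => Real.exp (-|u|)) (Ioi (0:ℝ)) :=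
    integrable_exp_neg_abs'.integrableOn
  rw [← intervalIntegral.integral_Iic_add_Ioi h1 h2]
  have e1 : (∫ u in Iic (0:ℝ), Real.exp (-|u|)) = ∫ u in Iic (0:ℝ), Real.exp u := by
    refine setIntegral_congr_fun measurableSet_Iic (fun u hu => ?_)
    rw [abs_of_nonpos (mem_Iic.mp hu), neg_neg]
  have e2 : (∫ u in Ioi (0:ℝ), Real.exp (-|u|)) = ∫ u in Ioi (0:ℝ), Real.exp (-u) := by
    refine setIntegral_congr_fun measurableSet_Ioi (fun u hu => ?_)
    rw [abs_of_pos (mem_Ioi.mp hu)]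
  rw [e1, e2, integral_exp_Iic_zero, integral_exp_neg_Ioi_zero]
  norm_num

lemma integrable_exp_neg_abs_scaled :
    Integrable (fun u : ℝ => Real.exp (-(5/6 * |u|))) := by
  have h : (fun u : ℝ => Real.exp (-(5/6 * |u|)))
      = fun u : ℝ => Real.exp (-|5/6 * u|) := by
    funext u
    rw [abs_mul, abs_of_pos (by norm_num : (0:ℝ) < 5/6)]
  rw [h]
  exact (integrable_comp_mul_left_iff (fun u : ℝ => Real.exp (-|u|))
    (by norm_num : (5/6 : ℝ) ≠ 0)).mpr integrable_exp_neg_abs'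

lemma integral_exp_neg_abs_scaled :
    (∫ u : ℝ, Real.exp (-(5/6 * |u|))) = 12/5 := by
  have h : (fun u : ℝ => Real.exp (-(5/6 * |u|)))
      = fun u : ℝ => Real.exp (-|5/6 * u|) := by
    funext u
    rw [abs_mul, abs_of_pos (by norm_num : (0:ℝ) < 5/6)]
  rw [h, Measure.integral_comp_mul_left (fun u : ℝ => Real.exp (-|u|)) (5/6),
    integral_exp_neg_abs']
  rw [smul_eq_mul]
  rw [abs_of_pos (by norm_num : (0:ℝ) < (5/6 : ℝ)⁻¹)]
  norm_num

/-- For `Ψ(x) = (2/π) arctan(e^{x/6})` and `p(x) = (1/2)e^{-|x|}`: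
`(1 - d²/dx²)Ψ' ≥ (1/2)Ψ'` pointwise, and consequently
`p * Ψ' ≤ 2 Ψ'` pointwise, i.e. `(1-∂_x²)^{-1}Ψ' ≤ 2Ψ'`. -/
theorem stmt_13 (Ψ : ℝ → ℝ)
    (hΨ : Ψ = fun x => (2 / Real.pi) * Real.arctan (Real.exp (x / 6))) :
    (∀ x : ℝ,
      deriv Ψ x - deriv (deriv (deriv Ψ)) x ≥ (1 / 2) * deriv Ψ x) ∧
    (∀ x : ℝ,
      (∫ t : ℝ, (1 / 2) * Real.exp (-|x - t|) * deriv Ψ t) ≤ 2 * deriv Ψ x) := by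
  have hd1 : deriv Ψ = gg := by
    funext x
    rw [hΨ]
    exact (hasDerivAt_gg x).deriv
  have hd2 : deriv gg = gg1 := funext fun x => (hasDerivAt_gg1 x).deriv
  have hd3 : deriv gg1 = gg2 := funext fun x => (hasDerivAt_gg2 x).deriv
  constructor
  · intro x
    rw [hd1, hd2, hd3]
    have hπ := Real.pi_pos
    have hc := Real.cosh_pos (x/6)
    have hs : Real.sinh (x/6)^2 = Real.cosh (x/6)^2 - 1 := Real.sinh_sq _
    rw [ge_iff_le, ← sub_nonneg]
    have heq : gg x - gg2 x - 1/2 * gg x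
        = (17 * Real.cosh (x/6)^2 + 2) / (216 * Real.pi * Real.cosh (x/6)^3) := by
      rw [gg, gg2, hs]
      field_simp
      ring
    rw [heq]
    positivity
  · intro x
    rw [hd1]
    have hπ := Real.pi_pos
    have hgx := gg_pos x
    -- integrability of the dominating function
    have hI : Integrable (fun t : ℝ => Real.exp (-(5/6 * |x - t|))) :=
      (integrable_comp_sub_left (fun u : ℝ => Real.exp (-(5/6 * |u|))) x).mpr
        integrable_exp_neg_abs_scaled
    have hIdom : Integrable (fun t : ℝ => (1/2 * gg x) * Real.exp (-(5/6 * |x - t|))) :=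
      hI.const_mul _
    -- pointwise bound
    have hbound : ∀ t : ℝ, 1/2 * Real.exp (-|x - t|) * gg t
        ≤ (1/2 * gg x) * Real.exp (-(5/6 * |x - t|)) := by
      intro t
      have hct := Real.cosh_pos (t/6)
      have hcx := Real.cosh_pos (x/6)
      have hkey : Real.cosh (x/6) ≤ Real.exp (|x - t|/6) * Real.cosh (t/6) := by
        have := cosh_add_le ((x - t)/6) (t/6)
        have hsum : (x - t)/6 + t/6 = x/6 := by ring
        have habs : |(x - t)/6| = |x - t|/6 := by
          rw [abs_div]
          norm_num
        rw [hsum, habs] at this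
        exact this
      rw [gg, gg]
      rw [show 1/2 * Real.exp (-|x - t|) * ((1/(6*Real.pi)) * (Real.cosh (t/6))⁻¹)
          = (1/(12*Real.pi)) * (Real.exp (-|x - t|) / Real.cosh (t/6)) by
        field_simp
        ring]
      rw [show (1/2 * ((1/(6*Real.pi)) * (Real.cosh (x/6))⁻¹)) * Real.exp (-(5/6 * |x - t|))
          = (1/(12*Real.pi)) * (Real.exp (-(5/6 * |x - t|)) / Real.cosh (x/6)) by
        field_simp
        ring]
      have h12 : (0:ℝ) < 1/(12*Real.pi) := by positivity
      refine mul_le_mul_of_nonneg_left ?_ h12.le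
      rw [div_le_div_iff₀ hct hcx]
      calc Real.exp (-|x - t|) * Real.cosh (x/6)
          ≤ Real.exp (-|x - t|) * (Real.exp (|x - t|/6) * Real.cosh (t/6)) := by
            exact mul_le_mul_of_nonneg_left hkey (Real.exp_pos _).le
        _ = Real.exp (-(5/6 * |x - t|)) * Real.cosh (t/6) := by
            rw [← mul_assoc, ← Real.exp_add]
            ring_nf
    have hmono : (∫ t : ℝ, 1/2 * Real.exp (-|x - t|) * gg t)
        ≤ ∫ t : ℝ, (1/2 * gg x) * Real.exp (-(5/6 * |x - t|)) := by
      refine integral_mono_of_nonneg (ae_of_all _ fun t => ?_) hIdom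
        (ae_of_all _ fun t => hbound t)
      have := (gg_pos t).le
      positivity
    have hval : (∫ t : ℝ, (1/2 * gg x) * Real.exp (-(5/6 * |x - t|)))
        = (1/2 * gg x) * (12/5) := by
      rw [integral_const_mul]
      congr 1
      rw [integral_sub_left_eq_self (fun u : ℝ => Real.exp (-(5/6 * |u|))) volume x]
      exact integral_exp_neg_abs_scaled
    calc (∫ t : ℝ, 1/2 * Real.exp (-|x - t|) * gg t)
        ≤ (1/2 * gg x) * (12/5) := by rw [← hval]; exact hmono
      _ ≤ 2 * gg x := by nlinarith
end
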